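/- Let 𝓕 = 𝓖 = ((e_m, e_m*))_{m≥1} be the canonical orthonormal basis of ℓ_2 with its coordinate functionals, and let u = e_1 ⊗ e_1 + e_2 ⊗ e_2 ∈ ℓ_2 ⊗ ℓ_2. Then α^Bess_{𝓕,𝓖}(u) = 1, while the projective tensor norm satisfies π(u) = 2. In particular α^Bess_{𝓕,𝓖} is not proportional to the projective norm on ℓ_2 ⊗ ℓ_2. -/

import Mathlib

open Filter Finset TensorProduct
open scoped ENNReal

variable {𝕂 : Type*} [RCLike 𝕂]

set_option maxHeartbeats 1000000

/-- `ℓ_2` over `𝕂`. -/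
noncomputable abbrev ellTwo (𝕂 : Type*) [RCLike 𝕂] := lp (fun _ : ℕ => 𝕂) 2

/-- The canonical basis vector `e_n` of `ℓ_2`. -/
noncomputable def eTwo (𝕂 : Type*) [RCLike 𝕂] (n : ℕ) : ellTwo 𝕂 :=
  lp.single 2 n (1 : 𝕂)


/-- The Besselian crossnorm `α^Bess_{𝓕,𝓖}` on `ℓ_2 ⊗ ℓ_2`, where `𝓕 = 𝓖` is the
canonical orthonormal basis `((e_m, e_m*))` of `ℓ_2` (so `e_m*(x) = x_m`). -/
noncomputable def alphaBessL2 (u : ellTwo 𝕂 ⊗[𝕂] ellTwo 𝕂) : ℝ :=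
  sInf {t : ℝ | ∃ (R : ℕ) (x y : ℕ → ellTwo 𝕂),
    u = ∑ r ∈ Finset.range R, x r ⊗ₜ[𝕂] y r ∧
    t = ⨆ fg : {f : ellTwo 𝕂 →L[𝕂] 𝕂 // ‖f‖ ≤ 1} × {g : ellTwo 𝕂 →L[𝕂] 𝕂 // ‖g‖ ≤ 1},
      ∑ r ∈ Finset.range R, ∑' mn : ℕ × ℕ,
        ‖x r mn.1‖ * ‖y r mn.2‖ * ‖fg.1.1 (eTwo 𝕂 mn.1)‖ * ‖fg.2.1 (eTwo 𝕂 mn.2)‖}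

/-- The projective tensor norm `π` on `ℓ_2 ⊗ ℓ_2` (with respect to the `ℓ_2` norms). -/
noncomputable def projNormL2 (u : ellTwo 𝕂 ⊗[𝕂] ellTwo 𝕂) : ℝ :=
  sInf {t : ℝ | ∃ (R : ℕ) (x y : ℕ → ellTwo 𝕂),
    u = ∑ r ∈ Finset.range R, x r ⊗ₜ[𝕂] y r ∧
    t = ∑ r ∈ Finset.range R, ‖x r‖ * ‖y r‖}


lemma eTwo_apply_self (n : ℕ) : (eTwo 𝕂 n) n = 1 := lp.single_apply_self 2 n 1

lemma eTwo_apply_ne {m n : ℕ} (h : m ≠ n) : (eTwo 𝕂 n) m = 0 := lp.single_apply_ne 2 n 1 h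

lemma norm_eTwo (n : ℕ) : ‖eTwo 𝕂 n‖ = 1 := by
  have h : ‖lp.single (E := fun _ : ℕ => 𝕂) 2 n ((fun _ : ℕ => (1:𝕂)) n)‖
      = ‖(fun _ : ℕ => (1:𝕂)) n‖ :=
    lp.norm_single (E := fun _ : ℕ => 𝕂) (p := 2) (by norm_num) n ((fun _ : ℕ => (1:𝕂)) n)
  simpa [eTwo] using h

lemma summable_norm_sq (x : ellTwo 𝕂) : Summable (fun m => ‖x m‖ ^ 2) := by
  have := (lp.memℓp x).summable (p := 2) (by norm_num)
  simpa [ENNReal.toReal_ofNat, Real.rpow_two] using this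

lemma tsum_norm_sq (x : ellTwo 𝕂) : ∑' m, ‖x m‖ ^ 2 = ‖x‖ ^ 2 := by
  have := lp.norm_rpow_eq_tsum (p := 2) (by norm_num) x
  simp only [ENNReal.toReal_ofNat, Real.rpow_two] at this
  exact this.symm

lemma cs2 {a b c d X Y : ℝ} (ha : 0 ≤ a) (hb : 0 ≤ b) (hc : 0 ≤ c) (hd : 0 ≤ d)
    (hX : 0 ≤ X) (hY : 0 ≤ Y) (h1 : a ^ 2 + b ^ 2 ≤ X ^ 2) (h2 : c ^ 2 + d ^ 2 ≤ Y ^ 2) :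
    a * c + b * d ≤ X * Y := by
  have h : (a * c + b * d) ^ 2 ≤ (X * Y) ^ 2 := by
    nlinarith [sq_nonneg (a * d - b * c), sq_nonneg (a*c+b*d)]
  have := Real.sqrt_le_sqrt h
  rwa [Real.sqrt_sq (by positivity), Real.sqrt_sq (by positivity)] at this

lemma cs_summable {a b : ℕ → ℝ} (ha2 : Summable fun m => a m ^ 2)
    (hb2 : Summable fun m => b m ^ 2) (ha : ∀ m, 0 ≤ a m) (hb : ∀ m, 0 ≤ b m) :
    Summable (fun m => a m * b m) := by
  refine Summable.of_nonneg_of_le (fun m => mul_nonneg (ha m) (hb m))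
    (fun m => ?_) (((ha2.add hb2).div_const 2))
  have := sq_nonneg (a m - b m)
  nlinarith

lemma cs_tsum {a b : ℕ → ℝ} (ha2 : Summable fun m => a m ^ 2)
    (hb2 : Summable fun m => b m ^ 2) (ha : ∀ m, 0 ≤ a m) (hb : ∀ m, 0 ≤ b m) :
    ∑' m, a m * b m ≤ Real.sqrt (∑' m, a m ^ 2) * Real.sqrt (∑' m, b m ^ 2) := by
  refine Summable.tsum_le_of_sum_le (cs_summable ha2 hb2 ha hb) (fun s => ?_)
  refine (Real.sum_mul_le_sqrt_mul_sqrt s a b).trans ?_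
  gcongr <;> [skip; skip] <;>
  · exact Summable.sum_le_tsum s (fun m _ => sq_nonneg _) (by assumption)



-- Riesz representative
noncomputable def rz (f : ellTwo 𝕂 →L[𝕂] 𝕂) : ellTwo 𝕂 :=
  (InnerProductSpace.toDual 𝕂 (ellTwo 𝕂)).symm f

lemma norm_rz (f : ellTwo 𝕂 →L[𝕂] 𝕂) : ‖rz f‖ = ‖f‖ :=
  LinearIsometryEquiv.norm_map _ f

lemma norm_apply_eTwo (f : ellTwo 𝕂 →L[𝕂] 𝕂) (m : ℕ) : ‖f (eTwo 𝕂 m)‖ = ‖rz f m‖ := by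
  have h1 : (inner 𝕂 (rz f) (eTwo 𝕂 m) : 𝕂) = f (eTwo 𝕂 m) :=
    InnerProductSpace.toDual_symm_apply
  have h2 : (inner 𝕂 (rz f) (eTwo 𝕂 m) : 𝕂) = inner 𝕂 (rz f m) (1 : 𝕂) :=
    lp.inner_single_right m (1:𝕂) (rz f)
  rw [← h1, h2, RCLike.inner_apply]
  simp

lemma key1_summable (x : ellTwo 𝕂) (f : ellTwo 𝕂 →L[𝕂] 𝕂) :
    Summable (fun m => ‖x m‖ * ‖f (eTwo 𝕂 m)‖) := by
  simp only [norm_apply_eTwo]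
  exact cs_summable (summable_norm_sq x) (summable_norm_sq (rz f))
    (fun m => norm_nonneg _) (fun m => norm_nonneg _)

lemma key1_tsum (x : ellTwo 𝕂) (f : ellTwo 𝕂 →L[𝕂] 𝕂) :
    ∑' m, ‖x m‖ * ‖f (eTwo 𝕂 m)‖ ≤ ‖x‖ * ‖f‖ := by
  simp only [norm_apply_eTwo]
  refine (cs_tsum (summable_norm_sq x) (summable_norm_sq (rz f))
    (fun m => norm_nonneg _) (fun m => norm_nonneg _)).trans ?_
  rw [tsum_norm_sq, tsum_norm_sq, Real.sqrt_sq (norm_nonneg _),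
    Real.sqrt_sq (norm_nonneg _), norm_rz]

lemma two_coord_le (f : ellTwo 𝕂 →L[𝕂] 𝕂) :
    ‖f (eTwo 𝕂 0)‖ ^ 2 + ‖f (eTwo 𝕂 1)‖ ^ 2 ≤ ‖f‖ ^ 2 := by
  simp only [norm_apply_eTwo]
  rw [← norm_rz f, ← tsum_norm_sq (rz f)]
  have h := Summable.sum_le_tsum ({0, 1} : Finset ℕ) (fun m _ => sq_nonneg ‖rz f m‖)
    (summable_norm_sq (rz f))
  simpa using h

lemma key2_summable (x y : ellTwo 𝕂) (f g : ellTwo 𝕂 →L[𝕂] 𝕂) :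
    Summable (fun mn : ℕ × ℕ =>
      ‖x mn.1‖ * ‖y mn.2‖ * ‖f (eTwo 𝕂 mn.1)‖ * ‖g (eTwo 𝕂 mn.2)‖) := by
  have h := (key1_summable x f).mul_of_nonneg (key1_summable y g)
    (fun m => mul_nonneg (norm_nonneg _) (norm_nonneg _))
    (fun m => mul_nonneg (norm_nonneg _) (norm_nonneg _))
  exact h.congr (fun mn => by ring)

lemma key2_tsum (x y : ellTwo 𝕂) (f g : ellTwo 𝕂 →L[𝕂] 𝕂)
    (hf : ‖f‖ ≤ 1) (hg : ‖g‖ ≤ 1) :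
    ∑' mn : ℕ × ℕ, ‖x mn.1‖ * ‖y mn.2‖ * ‖f (eTwo 𝕂 mn.1)‖ * ‖g (eTwo 𝕂 mn.2)‖
      ≤ ‖x‖ * ‖y‖ := by
  have hre : ∑' mn : ℕ × ℕ, ‖x mn.1‖ * ‖y mn.2‖ * ‖f (eTwo 𝕂 mn.1)‖ * ‖g (eTwo 𝕂 mn.2)‖
      = ∑' mn : ℕ × ℕ, (‖x mn.1‖ * ‖f (eTwo 𝕂 mn.1)‖) * (‖y mn.2‖ * ‖g (eTwo 𝕂 mn.2)‖) := by
    congr 1; funext mn; ring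
  rw [hre, ← Summable.tsum_mul_tsum (key1_summable x f) (key1_summable y g)
    ((key1_summable x f).mul_of_nonneg (key1_summable y g)
      (fun m => mul_nonneg (norm_nonneg _) (norm_nonneg _))
      (fun m => mul_nonneg (norm_nonneg _) (norm_nonneg _)))]
  have h1 := key1_tsum x f
  have h2 := key1_tsum y g
  have n1 : (0:ℝ) ≤ ∑' m, ‖x m‖ * ‖f (eTwo 𝕂 m)‖ :=
    tsum_nonneg (fun m => mul_nonneg (norm_nonneg _) (norm_nonneg _))
  have n2 : (0:ℝ) ≤ ∑' m, ‖y m‖ * ‖g (eTwo 𝕂 m)‖ :=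
    tsum_nonneg (fun m => mul_nonneg (norm_nonneg _) (norm_nonneg _))
  calc _ ≤ (‖x‖ * ‖f‖) * (‖y‖ * ‖g‖) := by
        exact mul_le_mul h1 h2 n2 (by positivity)
    _ ≤ (‖x‖ * 1) * (‖y‖ * 1) := by gcongr <;> positivity
    _ = ‖x‖ * ‖y‖ := by ring

/-- Coordinate functional `e_i^*`. -/
noncomputable def coFn (𝕂 : Type*) [RCLike 𝕂] (i : ℕ) : ellTwo 𝕂 →L[𝕂] 𝕂 :=
  innerSL 𝕂 (eTwo 𝕂 i)

lemma coFn_apply (i : ℕ) (x : ellTwo 𝕂) : coFn 𝕂 i x = x i := by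
  have : (inner 𝕂 (eTwo 𝕂 i) x : 𝕂) = inner 𝕂 ((1:𝕂)) (x i) :=
    lp.inner_single_left i (1:𝕂) x
  simp only [coFn, innerSL_apply_apply]
  rw [this, RCLike.inner_apply]
  simp

lemma norm_coFn (i : ℕ) : ‖coFn 𝕂 i‖ = 1 := by
  rw [coFn, innerSL_apply_norm, norm_eTwo]

lemma coFn_eTwo (i m : ℕ) : coFn 𝕂 i (eTwo 𝕂 m) = if m = i then 1 else 0 := by
  rw [coFn_apply]
  rcases eq_or_ne m i with h | h
  · subst h; simp [eTwo_apply_self]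
  · simp [h, eTwo_apply_ne (Ne.symm h)]

/-- The functional `f ⊗ g` on the tensor product. -/
noncomputable def phi (f g : ellTwo 𝕂 →L[𝕂] 𝕂) : ellTwo 𝕂 ⊗[𝕂] ellTwo 𝕂 →ₗ[𝕂] 𝕂 :=
  TensorProduct.lift (LinearMap.mk₂ 𝕂 (fun x y => f x * g y)
    (fun x x' y => by simp [add_mul])
    (fun c x y => by simp [mul_assoc])
    (fun x y y' => by simp [mul_add])
    (fun c x y => by simp; ring))

lemma phi_tmul (f g : ellTwo 𝕂 →L[𝕂] 𝕂) (x y : ellTwo 𝕂) :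
    phi f g (x ⊗ₜ[𝕂] y) = f x * g y := rfl

lemma phi_sum (f g : ellTwo 𝕂 →L[𝕂] 𝕂) (R : ℕ) (x y : ℕ → ellTwo 𝕂) :
    phi f g (∑ r ∈ Finset.range R, x r ⊗ₜ[𝕂] y r)
      = ∑ r ∈ Finset.range R, f (x r) * g (y r) := by
  rw [map_sum]
  simp [phi_tmul]

lemma tsum_coFn0 (x y : ellTwo 𝕂) :
    ∑' mn : ℕ × ℕ, ‖x mn.1‖ * ‖y mn.2‖ * ‖(coFn 𝕂 0) (eTwo 𝕂 mn.1)‖ *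
      ‖(coFn 𝕂 0) (eTwo 𝕂 mn.2)‖ = ‖x 0‖ * ‖y 0‖ := by
  have h0 : ∀ mn : ℕ × ℕ, mn ≠ (0, 0) →
      ‖x mn.1‖ * ‖y mn.2‖ * ‖(coFn 𝕂 0) (eTwo 𝕂 mn.1)‖ * ‖(coFn 𝕂 0) (eTwo 𝕂 mn.2)‖ = 0 := by
    rintro ⟨m, n⟩ h
    have : m ≠ 0 ∨ n ≠ 0 := by
      by_contra hc; push_neg at hc; exact h (by simp [hc.1, hc.2, Prod.ext_iff])
    rcases this with h' | h' <;> simp [coFn_eTwo, h']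
  rw [tsum_eq_single ((0, 0) : ℕ × ℕ) h0]
  simp [coFn_eTwo]

lemma tsum_eTwo (r : ℕ) (f g : ellTwo 𝕂 →L[𝕂] 𝕂) :
    ∑' mn : ℕ × ℕ, ‖eTwo 𝕂 r mn.1‖ * ‖eTwo 𝕂 r mn.2‖ * ‖f (eTwo 𝕂 mn.1)‖ *
      ‖g (eTwo 𝕂 mn.2)‖ = ‖f (eTwo 𝕂 r)‖ * ‖g (eTwo 𝕂 r)‖ := by
  have h0 : ∀ mn : ℕ × ℕ, mn ≠ (r, r) →
      ‖eTwo 𝕂 r mn.1‖ * ‖eTwo 𝕂 r mn.2‖ * ‖f (eTwo 𝕂 mn.1)‖ * ‖g (eTwo 𝕂 mn.2)‖ = 0 := by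
    rintro ⟨m, n⟩ h
    have : m ≠ r ∨ n ≠ r := by
      by_contra hc; push_neg at hc; exact h (by simp [hc.1, hc.2, Prod.ext_iff])
    rcases this with h' | h' <;> simp [eTwo_apply_ne h']
  rw [tsum_eq_single ((r, r) : ℕ × ℕ) h0]
  simp [eTwo_apply_self]

/-- The distinguished pair of unit-ball functionals `(e_0^*, e_0^*)`. -/
noncomputable def fgZero (𝕂 : Type*) [RCLike 𝕂] :
    {f : ellTwo 𝕂 →L[𝕂] 𝕂 // ‖f‖ ≤ 1} × {g : ellTwo 𝕂 →L[𝕂] 𝕂 // ‖g‖ ≤ 1} :=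
  (⟨coFn 𝕂 0, (norm_coFn 0).le⟩, ⟨coFn 𝕂 0, (norm_coFn 0).le⟩)

instance instNonemptyFG : Nonempty
    ({f : ellTwo 𝕂 →L[𝕂] 𝕂 // ‖f‖ ≤ 1} × {g : ellTwo 𝕂 →L[𝕂] 𝕂 // ‖g‖ ≤ 1}) :=
  ⟨fgZero 𝕂⟩

lemma bddF (R : ℕ) (x y : ℕ → ellTwo 𝕂) :
    BddAbove (Set.range (fun fg :
        {f : ellTwo 𝕂 →L[𝕂] 𝕂 // ‖f‖ ≤ 1} × {g : ellTwo 𝕂 →L[𝕂] 𝕂 // ‖g‖ ≤ 1} =>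
      ∑ r ∈ Finset.range R, ∑' mn : ℕ × ℕ,
        ‖x r mn.1‖ * ‖y r mn.2‖ * ‖fg.1.1 (eTwo 𝕂 mn.1)‖ * ‖fg.2.1 (eTwo 𝕂 mn.2)‖)) := by
  refine ⟨∑ r ∈ Finset.range R, ‖x r‖ * ‖y r‖, ?_⟩
  rintro t ⟨fg, rfl⟩
  exact Finset.sum_le_sum fun r _ => key2_tsum (x r) (y r) fg.1.1 fg.2.1 fg.1.2 fg.2.2

lemma bess_sup_lower (R : ℕ) (x y : ℕ → ellTwo 𝕂) :
    ‖∑ r ∈ Finset.range R, x r 0 * y r 0‖ ≤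
      ⨆ fg : {f : ellTwo 𝕂 →L[𝕂] 𝕂 // ‖f‖ ≤ 1} × {g : ellTwo 𝕂 →L[𝕂] 𝕂 // ‖g‖ ≤ 1},
        ∑ r ∈ Finset.range R, ∑' mn : ℕ × ℕ,
          ‖x r mn.1‖ * ‖y r mn.2‖ * ‖fg.1.1 (eTwo 𝕂 mn.1)‖ * ‖fg.2.1 (eTwo 𝕂 mn.2)‖ := by
  have h1 : ‖∑ r ∈ Finset.range R, x r 0 * y r 0‖ ≤
      ∑ r ∈ Finset.range R, ‖x r 0‖ * ‖y r 0‖ := by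
    refine (norm_sum_le _ _).trans ?_
    exact Finset.sum_le_sum fun r _ => (norm_mul _ _).le
  refine h1.trans ?_
  have h2 : ∑ r ∈ Finset.range R, ‖x r 0‖ * ‖y r 0‖ =
      ∑ r ∈ Finset.range R, ∑' mn : ℕ × ℕ,
        ‖x r mn.1‖ * ‖y r mn.2‖ * ‖(fgZero 𝕂).1.1 (eTwo 𝕂 mn.1)‖ *
          ‖(fgZero 𝕂).2.1 (eTwo 𝕂 mn.2)‖ := by
    refine Finset.sum_congr rfl fun r _ => ?_
    exact (tsum_coFn0 (x r) (y r)).symm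
  rw [h2]
  exact le_ciSup (bddF R x y) (fgZero 𝕂)

lemma bess_sup_canon :
    (⨆ fg : {f : ellTwo 𝕂 →L[𝕂] 𝕂 // ‖f‖ ≤ 1} × {g : ellTwo 𝕂 →L[𝕂] 𝕂 // ‖g‖ ≤ 1},
      ∑ r ∈ Finset.range 2, ∑' mn : ℕ × ℕ,
        ‖eTwo 𝕂 r mn.1‖ * ‖eTwo 𝕂 r mn.2‖ * ‖fg.1.1 (eTwo 𝕂 mn.1)‖ *
          ‖fg.2.1 (eTwo 𝕂 mn.2)‖) = 1 := by
  apply le_antisymm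
  · refine ciSup_le fun fg => ?_
    rw [Finset.sum_range_succ, Finset.sum_range_one, tsum_eTwo, tsum_eTwo]
    have hf := two_coord_le fg.1.1
    have hg := two_coord_le fg.2.1
    have hf1 : ‖fg.1.1 (eTwo 𝕂 0)‖ ^ 2 + ‖fg.1.1 (eTwo 𝕂 1)‖ ^ 2 ≤ 1 ^ 2 := by
      refine hf.trans ?_
      nlinarith [norm_nonneg fg.1.1, fg.1.2]
    have hg1 : ‖fg.2.1 (eTwo 𝕂 0)‖ ^ 2 + ‖fg.2.1 (eTwo 𝕂 1)‖ ^ 2 ≤ 1 ^ 2 := by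
      refine hg.trans ?_
      nlinarith [norm_nonneg fg.2.1, fg.2.2]
    have := cs2 (norm_nonneg _) (norm_nonneg _) (norm_nonneg _) (norm_nonneg _)
      zero_le_one zero_le_one hf1 hg1
    simpa [mul_comm] using this
  · have h : (1:ℝ) = ∑ r ∈ Finset.range 2, ∑' mn : ℕ × ℕ,
        ‖eTwo 𝕂 r mn.1‖ * ‖eTwo 𝕂 r mn.2‖ * ‖(fgZero 𝕂).1.1 (eTwo 𝕂 mn.1)‖ *
          ‖(fgZero 𝕂).2.1 (eTwo 𝕂 mn.2)‖ := by
      rw [Finset.sum_range_succ, Finset.sum_range_one, tsum_eTwo, tsum_eTwo]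
      simp [fgZero, coFn_eTwo]
    exact h.trans_le (le_ciSup (bddF 2 (fun r => eTwo 𝕂 r) (fun r => eTwo 𝕂 r)) (fgZero 𝕂))

lemma two_coord_vec (x : ellTwo 𝕂) : ‖x 0‖ ^ 2 + ‖x 1‖ ^ 2 ≤ ‖x‖ ^ 2 := by
  rw [← tsum_norm_sq x]
  have h := Summable.sum_le_tsum ({0, 1} : Finset ℕ) (fun m _ => sq_nonneg ‖x m‖) (summable_norm_sq x)
  simpa using h

lemma pt_cs (x y : ellTwo 𝕂) : ‖x 0 * y 0 + x 1 * y 1‖ ≤ ‖x‖ * ‖y‖ := by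
  refine (norm_add_le _ _).trans ?_
  rw [norm_mul, norm_mul]
  exact cs2 (norm_nonneg _) (norm_nonneg _) (norm_nonneg _) (norm_nonneg _)
    (norm_nonneg _) (norm_nonneg _) (two_coord_vec x) (two_coord_vec y)


-- general lower bound for elements of the Bess set
lemma bess_set_lower {u : ellTwo 𝕂 ⊗[𝕂] ellTwo 𝕂} {t : ℝ}
    (ht : ∃ (R : ℕ) (x y : ℕ → ellTwo 𝕂),
      u = ∑ r ∈ Finset.range R, x r ⊗ₜ[𝕂] y r ∧
      t = ⨆ fg : {f : ellTwo 𝕂 →L[𝕂] 𝕂 // ‖f‖ ≤ 1} × {g : ellTwo 𝕂 →L[𝕂] 𝕂 // ‖g‖ ≤ 1},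
        ∑ r ∈ Finset.range R, ∑' mn : ℕ × ℕ,
          ‖x r mn.1‖ * ‖y r mn.2‖ * ‖fg.1.1 (eTwo 𝕂 mn.1)‖ * ‖fg.2.1 (eTwo 𝕂 mn.2)‖) :
    ‖phi (coFn 𝕂 0) (coFn 𝕂 0) u‖ ≤ t := by
  obtain ⟨R, x, y, hu, rfl⟩ := ht
  have h1 : phi (coFn 𝕂 0) (coFn 𝕂 0) u = ∑ r ∈ Finset.range R, x r 0 * y r 0 := by
    rw [hu, phi_sum]
    exact Finset.sum_congr rfl fun r _ => by rw [coFn_apply, coFn_apply]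
  rw [h1]
  exact bess_sup_lower R x y

lemma phi00_u :
    phi (coFn 𝕂 0) (coFn 𝕂 0) (eTwo 𝕂 0 ⊗ₜ[𝕂] eTwo 𝕂 0 + eTwo 𝕂 1 ⊗ₜ[𝕂] eTwo 𝕂 1) = 1 := by
  rw [map_add, phi_tmul, phi_tmul]
  simp [coFn_eTwo]


/-- For the canonical orthonormal basis `𝓕 = 𝓖 = ((e_m, e_m*))` of `ℓ_2`
and `u = e_1 ⊗ e_1 + e_2 ⊗ e_2`, one has `α^Bess_{𝓕,𝓖}(u) = 1` while `π(u) = 2`; in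
particular `α^Bess_{𝓕,𝓖}` is not proportional to the projective norm on `ℓ_2 ⊗ ℓ_2`. -/
theorem alphaBess_ellTwo_ne_proj :
    alphaBessL2 (eTwo 𝕂 0 ⊗ₜ[𝕂] eTwo 𝕂 0 + eTwo 𝕂 1 ⊗ₜ[𝕂] eTwo 𝕂 1) = 1 ∧
    projNormL2 (eTwo 𝕂 0 ⊗ₜ[𝕂] eTwo 𝕂 0 + eTwo 𝕂 1 ⊗ₜ[𝕂] eTwo 𝕂 1) = 2 ∧
    ¬ ∃ cst : ℝ, ∀ v : ellTwo 𝕂 ⊗[𝕂] ellTwo 𝕂,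
        alphaBessL2 v = cst * projNormL2 v := by
  set u : ellTwo 𝕂 ⊗[𝕂] ellTwo 𝕂 := eTwo 𝕂 0 ⊗ₜ[𝕂] eTwo 𝕂 0 + eTwo 𝕂 1 ⊗ₜ[𝕂] eTwo 𝕂 1 with hu_def
  have hu2 : u = ∑ r ∈ Finset.range 2, eTwo 𝕂 r ⊗ₜ[𝕂] eTwo 𝕂 r := by
    rw [Finset.sum_range_succ, Finset.sum_range_one]
  -- α^Bess(u) = 1
  have hbddA : ∀ w : ellTwo 𝕂 ⊗[𝕂] ellTwo 𝕂, BddBelow {t : ℝ | ∃ (R : ℕ) (x y : ℕ → ellTwo 𝕂),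
      w = ∑ r ∈ Finset.range R, x r ⊗ₜ[𝕂] y r ∧
      t = ⨆ fg : {f : ellTwo 𝕂 →L[𝕂] 𝕂 // ‖f‖ ≤ 1} × {g : ellTwo 𝕂 →L[𝕂] 𝕂 // ‖g‖ ≤ 1},
        ∑ r ∈ Finset.range R, ∑' mn : ℕ × ℕ,
          ‖x r mn.1‖ * ‖y r mn.2‖ * ‖fg.1.1 (eTwo 𝕂 mn.1)‖ * ‖fg.2.1 (eTwo 𝕂 mn.2)‖} := by
    intro w
    refine ⟨0, ?_⟩
    rintro t ⟨R, x, y, hw, rfl⟩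
    refine Real.iSup_nonneg fun fg => ?_
    exact Finset.sum_nonneg fun r _ => tsum_nonneg fun mn => by positivity
  have memA : (1:ℝ) ∈ {t : ℝ | ∃ (R : ℕ) (x y : ℕ → ellTwo 𝕂),
      u = ∑ r ∈ Finset.range R, x r ⊗ₜ[𝕂] y r ∧
      t = ⨆ fg : {f : ellTwo 𝕂 →L[𝕂] 𝕂 // ‖f‖ ≤ 1} × {g : ellTwo 𝕂 →L[𝕂] 𝕂 // ‖g‖ ≤ 1},
        ∑ r ∈ Finset.range R, ∑' mn : ℕ × ℕ,
          ‖x r mn.1‖ * ‖y r mn.2‖ * ‖fg.1.1 (eTwo 𝕂 mn.1)‖ * ‖fg.2.1 (eTwo 𝕂 mn.2)‖} :=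
    ⟨2, fun r => eTwo 𝕂 r, fun r => eTwo 𝕂 r, hu2, bess_sup_canon.symm⟩
  have hA : alphaBessL2 u = 1 := by
    rw [alphaBessL2]
    refine le_antisymm (csInf_le (hbddA u) memA) (le_csInf ⟨1, memA⟩ ?_)
    intro t ht
    have := bess_set_lower (u := u) ht
    rwa [phi00_u, norm_one] at this
  have hP : projNormL2 u = 2 := by
    have memP : (2:ℝ) ∈ {t : ℝ | ∃ (R : ℕ) (x y : ℕ → ellTwo 𝕂),
        u = ∑ r ∈ Finset.range R, x r ⊗ₜ[𝕂] y r ∧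
        t = ∑ r ∈ Finset.range R, ‖x r‖ * ‖y r‖} := by
      refine ⟨2, fun r => eTwo 𝕂 r, fun r => eTwo 𝕂 r, hu2, ?_⟩
      rw [Finset.sum_range_succ, Finset.sum_range_one, norm_eTwo, norm_eTwo]
      norm_num
    have hbddP : BddBelow {t : ℝ | ∃ (R : ℕ) (x y : ℕ → ellTwo 𝕂),
        u = ∑ r ∈ Finset.range R, x r ⊗ₜ[𝕂] y r ∧
        t = ∑ r ∈ Finset.range R, ‖x r‖ * ‖y r‖} := by
      refine ⟨0, ?_⟩
      rintro t ⟨R, x, y, hw, rfl⟩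
      exact Finset.sum_nonneg fun r _ => by positivity
    rw [projNormL2]
    refine le_antisymm (csInf_le hbddP memP) (le_csInf ⟨2, memP⟩ ?_)
    rintro t ⟨R, x, y, hu', rfl⟩
    have h1 : phi (coFn 𝕂 0) (coFn 𝕂 0) u + phi (coFn 𝕂 1) (coFn 𝕂 1) u = 2 := by
      rw [hu_def]
      rw [map_add, map_add, phi_tmul, phi_tmul, phi_tmul, phi_tmul]
      simp [coFn_eTwo]
      norm_num
    have h2 : phi (coFn 𝕂 0) (coFn 𝕂 0) u + phi (coFn 𝕂 1) (coFn 𝕂 1) u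
        = ∑ r ∈ Finset.range R, (x r 0 * y r 0 + x r 1 * y r 1) := by
      rw [hu', phi_sum, phi_sum, ← Finset.sum_add_distrib]
      refine Finset.sum_congr rfl fun r _ => by
        rw [coFn_apply, coFn_apply, coFn_apply, coFn_apply]
    have h3 : (2:ℝ) = ‖phi (coFn 𝕂 0) (coFn 𝕂 0) u + phi (coFn 𝕂 1) (coFn 𝕂 1) u‖ := by
      rw [h1]
      simp
    rw [h3, h2]
    refine (norm_sum_le _ _).trans ?_
    exact Finset.sum_le_sum fun r _ => pt_cs (x r) (y r)
  refine ⟨hA, hP, ?_⟩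
  rintro ⟨c, hc⟩
  have hcu := hc u
  rw [hA, hP] at hcu
  have hc2 : c = 1 / 2 := by linarith
  set v : ellTwo 𝕂 ⊗[𝕂] ellTwo 𝕂 := eTwo 𝕂 0 ⊗ₜ[𝕂] eTwo 𝕂 0 with hv_def
  have hv1 : (1:ℝ) ≤ alphaBessL2 v := by
    rw [alphaBessL2]
    have memV : ∃ t : ℝ, t ∈ {t : ℝ | ∃ (R : ℕ) (x y : ℕ → ellTwo 𝕂),
        v = ∑ r ∈ Finset.range R, x r ⊗ₜ[𝕂] y r ∧
        t = ⨆ fg : {f : ellTwo 𝕂 →L[𝕂] 𝕂 // ‖f‖ ≤ 1} × {g : ellTwo 𝕂 →L[𝕂] 𝕂 // ‖g‖ ≤ 1},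
          ∑ r ∈ Finset.range R, ∑' mn : ℕ × ℕ,
            ‖x r mn.1‖ * ‖y r mn.2‖ * ‖fg.1.1 (eTwo 𝕂 mn.1)‖ * ‖fg.2.1 (eTwo 𝕂 mn.2)‖} :=
      ⟨_, 1, fun _ => eTwo 𝕂 0, fun _ => eTwo 𝕂 0, by rw [Finset.sum_range_one], rfl⟩
    refine le_csInf memV ?_
    intro t ht
    have hlow := bess_set_lower (u := v) ht
    have hphiv : phi (coFn 𝕂 0) (coFn 𝕂 0) v = 1 := by
      rw [hv_def, phi_tmul]
      simp [coFn_eTwo]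
    rwa [hphiv, norm_one] at hlow
  have hv2 : projNormL2 v ≤ 1 := by
    rw [projNormL2]
    refine csInf_le ⟨0, ?_⟩ ?_
    · rintro t ⟨R, x, y, hw, rfl⟩
      exact Finset.sum_nonneg fun r _ => by positivity
    · refine ⟨1, fun _ => eTwo 𝕂 0, fun _ => eTwo 𝕂 0, by rw [Finset.sum_range_one], ?_⟩
      rw [Finset.sum_range_one, norm_eTwo]
      norm_num
  have hcv := hc v
  rw [hc2] at hcv
  have : (1:ℝ) ≤ 1 / 2 * projNormL2 v := hcv ▸ hv1
  linarith
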